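/- There exists a sequence b : ℕ → ℝ with b_k > 0 for every k ∈ ℕ such that for all real t with |t| < 1: ((t + 1)/(4π)) · (π − arccos((t + 1)/2)) = Σ_{k=0}^∞ b_k t^k, with the series converging absolutely. -/

import Mathlib

open Real

noncomputable def dd (j : ℕ) : ℝ := (Nat.centralBinom j : ℝ) / 4 ^ j
noncomputable def cc (j : ℕ) : ℝ := dd j / (2 * j + 1)

lemma dd_pos (j : ℕ) : 0 < dd j := by
  unfold dd
  have := Nat.centralBinom_pos j
  positivity

lemma dd_le_one (j : ℕ) : dd j ≤ 1 := by
  unfold dd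
  rw [div_le_one (by positivity)]
  have h : Nat.centralBinom j ≤ 4 ^ j := by
    have h1 : Nat.centralBinom j ≤ 2 ^ (2 * j) := by
      rw [← Nat.sum_range_choose (2 * j)]
      exact Finset.single_le_sum (f := fun i => (2 * j).choose i) (fun i _ => Nat.zero_le _)
        (Finset.mem_range.2 (by omega))
    calc Nat.centralBinom j ≤ 2 ^ (2 * j) := h1
    _ = 4 ^ j := by rw [pow_mul]; norm_num
  exact_mod_cast h

lemma cc_pos (j : ℕ) : 0 < cc j := by
  unfold cc; have := dd_pos j; positivity

lemma cc_le_one (j : ℕ) : cc j ≤ 1 := by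
  unfold cc
  rw [div_le_one (by positivity)]
  calc dd j ≤ 1 := dd_le_one j
  _ ≤ 2 * (j:ℝ) + 1 := by nlinarith [Nat.cast_nonneg (α := ℝ) j]

lemma dd_rec (j : ℕ) : (2 * (j:ℝ) + 2) * dd (j + 1) = (2 * j + 1) * dd j := by
  have h := Nat.succ_mul_centralBinom_succ j
  have h' : ((j:ℝ) + 1) * (Nat.centralBinom (j+1) : ℝ) = 2 * (2 * j + 1) * Nat.centralBinom j := by
    exact_mod_cast congrArg (Nat.cast : ℕ → ℝ) h
  unfold dd
  have h4 : (4:ℝ) ^ (j+1) = 4 * 4 ^ j := by ring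
  rw [h4]
  field_simp
  linear_combination 2 * h'

/-- workhorse summability: anything bounded by `2(j+1) q^j`, `0 ≤ q < 1`, is summable. -/
lemma summable_workhorse {q : ℝ} (hq0 : 0 ≤ q) (hq : q < 1) {f : ℕ → ℝ}
    (hf : ∀ j, |f j| ≤ 2 * (j + 1) * q ^ j) : Summable f := by
  apply Summable.of_abs
  apply Summable.of_nonneg_of_le (fun j => abs_nonneg _) hf
  have h1 : Summable fun j : ℕ => (j:ℝ) ^ 1 * q ^ j :=
    summable_pow_mul_geometric_of_norm_lt_one 1
      (by rwa [Real.norm_eq_abs, abs_of_nonneg hq0])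
  have h2 : Summable fun j : ℕ => q ^ j := summable_geometric_of_lt_one hq0 hq
  have : Summable fun j : ℕ => 2 * ((j:ℝ) ^ 1 * q ^ j) + 2 * q ^ j :=
    (h1.mul_left 2).add (h2.mul_left 2)
  refine this.congr fun j => ?_
  ring

lemma abs_pow_le_pow {x : ℝ} (hx : |x| < 1) {m j : ℕ} (h : j ≤ m) : |x| ^ m ≤ |x| ^ j :=
  pow_le_pow_of_le_one (abs_nonneg x) hx.le h

/-- summability of `∑ dd j * x^(2j)` -/
lemma summable_g {x : ℝ} (hx : |x| < 1) : Summable (fun j => dd j * x ^ (2 * j)) := by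
  apply summable_workhorse (abs_nonneg x) hx
  intro j
  rw [abs_mul, abs_of_pos (dd_pos j), abs_pow]
  calc dd j * |x| ^ (2*j) ≤ 1 * |x| ^ j := by
        apply mul_le_mul (dd_le_one j) (abs_pow_le_pow hx (by omega)) (by positivity) one_pos.le
  _ ≤ 2 * (j + 1) * |x| ^ j := by
        apply mul_le_mul_of_nonneg_right (by linarith [Nat.cast_nonneg (α := ℝ) j]) (by positivity)

noncomputable def gg (x : ℝ) : ℝ := ∑' j, dd j * x ^ (2 * j)

/-- summability of the termwise derivative series -/
lemma summable_gder {x : ℝ} (hx : |x| < 1) :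
    Summable (fun j => dd j * ((2 * j : ℕ) * x ^ (2 * j - 1))) := by
  apply summable_workhorse (abs_nonneg x) hx
  intro j
  match j with
  | 0 => simp
  | (j+1) =>
    rw [abs_mul, abs_mul, abs_of_pos (dd_pos _), abs_pow]
    have h1 : |((2 * (j+1) : ℕ) : ℝ)| = 2 * ((j:ℝ) + 1) := by
      rw [abs_of_nonneg (by positivity)]; push_cast; ring
    rw [h1]
    have h2 : |x| ^ (2 * (j+1) - 1) ≤ |x| ^ (j + 1) := abs_pow_le_pow hx (by omega)
    calc dd (j+1) * (2 * ((j:ℝ) + 1) * |x| ^ (2 * (j+1) - 1))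
        ≤ 1 * (2 * ((j:ℝ) + 1) * |x| ^ (j + 1)) := by
          apply mul_le_mul (dd_le_one _) (by nlinarith [pow_nonneg (abs_nonneg x) (j+1), pow_nonneg (abs_nonneg x) (2*(j+1)-1)]) (by positivity) one_pos.le
    _ = 2 * (((j:ℕ)+1:ℕ) + 1 - 1 : ℝ) * |x| ^ (j + 1) := by push_cast; ring
    _ ≤ 2 * ((((j+1):ℕ):ℝ) + 1) * |x| ^ (j + 1) := by
          have : (0:ℝ) ≤ |x| ^ (j+1) := by positivity
          nlinarith
  
lemma gg_hasDerivAt {x : ℝ} (hx : |x| < 1) :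
    HasDerivAt gg (∑' j, dd j * ((2 * j : ℕ) * x ^ (2 * j - 1))) x := by
  set R : ℝ := (|x| + 1) / 2 with hR
  have hR0 : 0 < R := by positivity
  have hR1 : R < 1 := by rw [hR]; linarith
  have hxR : |x| < R := by rw [hR]; linarith
  unfold gg
  apply hasDerivAt_tsum_of_isPreconnected
    (u := fun j => dd j * ((2 * j : ℕ) * R ^ (2 * j - 1)))
    (g := fun j y => dd j * y ^ (2 * j))
    (g' := fun j y => dd j * ((2 * j : ℕ) * y ^ (2 * j - 1)))
    (t := Metric.ball (0:ℝ) R) (y₀ := x)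
  · exact summable_gder (by rwa [abs_of_pos hR0])
  · exact Metric.isOpen_ball
  · exact (convex_ball (0:ℝ) R).isPreconnected
  · intro n y _
    exact (hasDerivAt_pow (2*n) y).const_mul (dd n)
  · intro n y hy
    rw [Metric.mem_ball, dist_zero_right, Real.norm_eq_abs] at hy
    rw [Real.norm_eq_abs, abs_mul, abs_of_pos (dd_pos n), abs_mul, abs_pow]
    apply mul_le_mul_of_nonneg_left _ (dd_pos n).le
    rw [Nat.abs_cast]
    apply mul_le_mul_of_nonneg_left _ (Nat.cast_nonneg _)
    exact pow_le_pow_left₀ (abs_nonneg y) hy.le _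
  · rw [Metric.mem_ball, dist_zero_right, Real.norm_eq_abs]; exact hxR
  · exact summable_g hx
  · rw [Metric.mem_ball, dist_zero_right, Real.norm_eq_abs]; exact hxR

lemma summable_odd_coeff {x : ℝ} (hx : |x| < 1) {φ : ℕ → ℝ}
    (hφ : ∀ j, |φ j| ≤ 2 * (j + 1)) : Summable (fun j => φ j * x ^ (2 * j + 1)) := by
  apply summable_workhorse (abs_nonneg x) hx
  intro j
  rw [abs_mul, abs_pow]
  calc |φ j| * |x| ^ (2 * j + 1) ≤ (2 * ((j:ℝ) + 1)) * |x| ^ j := by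
        apply mul_le_mul (hφ j) (abs_pow_le_pow hx (by omega)) (by positivity) (by positivity)
  _ = 2 * ((j:ℝ) + 1) * |x| ^ j := by ring

/-- the ODE coefficient identity: `(1 - x²) g'(x) = x g(x)` -/
lemma key_identity {x : ℝ} (hx : |x| < 1) :
    (1 - x ^ 2) * (∑' j, dd j * ((2 * j : ℕ) * x ^ (2 * j - 1))) = x * gg x := by
  have hs1 : Summable (fun j => dd j * ((2 * j : ℕ) * x ^ (2 * j - 1))) := summable_gder hx
  -- series of (2j+1) dd j x^(2j+1)
  have hs2 : Summable (fun j : ℕ => (2 * (j:ℝ) + 1) * dd j * x ^ (2 * j + 1)) := by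
    apply summable_odd_coeff hx
    intro j
    rw [abs_mul, abs_of_nonneg (by positivity), abs_of_pos (dd_pos j)]
    nlinarith [dd_le_one j, dd_pos j, Nat.cast_nonneg (α := ℝ) j]
  have hs3 : Summable (fun j : ℕ => 2 * (j:ℝ) * dd j * x ^ (2 * j + 1)) := by
    apply summable_odd_coeff hx
    intro j
    rw [abs_mul, abs_of_nonneg (by positivity), abs_of_pos (dd_pos j)]
    nlinarith [dd_le_one j, dd_pos j, Nat.cast_nonneg (α := ℝ) j]
  have hs4 : Summable (fun j => dd j * x ^ (2 * j + 1)) := by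
    apply summable_odd_coeff hx
    intro j
    rw [abs_of_pos (dd_pos j)]
    nlinarith [dd_le_one j, Nat.cast_nonneg (α := ℝ) j]
  -- step 1: reindex the derivative series
  have e1 : (∑' j, dd j * ((2 * j : ℕ) * x ^ (2 * j - 1)))
      = ∑' j : ℕ, (2 * (j:ℝ) + 1) * dd j * x ^ (2 * j + 1) := by
    rw [Summable.tsum_eq_zero_add hs1]
    simp only [Nat.mul_zero, Nat.cast_zero, zero_mul, mul_zero, zero_add]
    apply tsum_congr
    intro j
    rw [show (2 * (j + 1) : ℕ) = 2 * j + 2 by omega,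
       show (2 * j + 2 : ℕ) - 1 = 2 * j + 1 by omega]
    have := dd_rec j
    push_cast
    linear_combination x ^ (2 * j + 1) * this
  have e2 : x ^ 2 * (∑' j, dd j * ((2 * j : ℕ) * x ^ (2 * j - 1)))
      = ∑' j : ℕ, 2 * (j:ℝ) * dd j * x ^ (2 * j + 1) := by
    rw [← tsum_mul_left]
    apply tsum_congr
    intro j
    match j with
    | 0 => norm_num
    | (j+1) =>
      rw [show (2 * (j + 1) : ℕ) - 1 = 2 * j + 1 by omega]
      push_cast
      ring
  rw [sub_mul, one_mul, e2, e1, ← Summable.tsum_sub hs2 hs3]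
  unfold gg
  rw [← tsum_mul_left]
  apply tsum_congr
  intro j
  ring

lemma const_of_deriv_zero {f : ℝ → ℝ} (hf : ∀ y ∈ Set.Ioo (-1:ℝ) 1, HasDerivAt f 0 y)
    {x : ℝ} (hx : x ∈ Set.Ioo (-1:ℝ) 1) : f x = f 0 := by
  have h0 : (0:ℝ) ∈ Set.Ioo (-1:ℝ) 1 := by norm_num
  have := Convex.norm_image_sub_le_of_norm_hasDerivWithin_le (f' := fun _ => (0:ℝ)) (C := 0)
    (fun y hy => (hf y hy).hasDerivWithinAt) (fun y _ => by simp)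
    (convex_Ioo (-1:ℝ) 1) h0 hx
  rw [zero_mul] at this
  have h2 : f x - f 0 = 0 := by
    have := le_antisymm this (norm_nonneg _)
    rwa [norm_eq_zero] at this
  linarith [h2]

lemma mem_Ioo_of_abs {x : ℝ} (hx : |x| < 1) : x ∈ Set.Ioo (-1:ℝ) 1 := by
  rw [Set.mem_Ioo]; constructor <;> [linarith [neg_abs_le x]; linarith [le_abs_self x]]

lemma sqrt_one_sub_sq_pos {x : ℝ} (hx : |x| < 1) : 0 < Real.sqrt (1 - x ^ 2) := by
  apply Real.sqrt_pos.2
  nlinarith [abs_nonneg x, sq_abs x]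

lemma gg_eq {x : ℝ} (hx : |x| < 1) : gg x = 1 / Real.sqrt (1 - x ^ 2) := by
  set h : ℝ → ℝ := fun y => gg y * Real.sqrt (1 - y ^ 2) with hh
  have hder : ∀ y ∈ Set.Ioo (-1:ℝ) 1, HasDerivAt h 0 y := by
    intro y hy
    have hy' : |y| < 1 := by rw [abs_lt]; exact ⟨hy.1, hy.2⟩
    have hsq := sqrt_one_sub_sq_pos hy'
    have h1 : HasDerivAt (fun z : ℝ => Real.sqrt (1 - z ^ 2))
        (-y / Real.sqrt (1 - y ^ 2)) y := by
      have hinner : HasDerivAt (fun z : ℝ => 1 - z ^ 2) (-(2 * y)) y := by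
        simpa using ((hasDerivAt_pow 2 y).const_sub 1)
      have houter : HasDerivAt (fun z : ℝ => Real.sqrt (1 - z ^ 2)) (1 / (2 * Real.sqrt (1 - y ^ 2)) * -(2 * y)) y := (Real.hasDerivAt_sqrt (by nlinarith [sq_abs y, abs_nonneg y] : 1 - y ^ 2 ≠ 0)).comp y hinner
      convert houter using 1
      field_simp
    have h2 : HasDerivAt h ((∑' j, dd j * ((2 * j : ℕ) * y ^ (2 * j - 1))) * Real.sqrt (1 - y ^ 2) + gg y * (-y / Real.sqrt (1 - y ^ 2))) y := (gg_hasDerivAt hy').mul h1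
    convert h2 using 1
    have hkey := key_identity hy'
    set D := ∑' j, dd j * ((2 * j : ℕ) * y ^ (2 * j - 1)) with hD
    have hsqsq : Real.sqrt (1 - y ^ 2) * Real.sqrt (1 - y ^ 2) = 1 - y ^ 2 :=
      Real.mul_self_sqrt (by nlinarith [sq_abs y, abs_nonneg y])
    have : (D * Real.sqrt (1 - y ^ 2) + gg y * (-y / Real.sqrt (1 - y ^ 2)))
        * Real.sqrt (1 - y ^ 2) = 0 := by
      field_simp
      linear_combination hkey + D * hsqsq
    have hne := hsq.ne'
    rcases mul_eq_zero.1 this with h | h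
    · exact h.symm
    · exact absurd h hne
  have := const_of_deriv_zero hder (mem_Ioo_of_abs hx)
  have hg0 : gg 0 = 1 := by
    unfold gg
    rw [tsum_eq_single 0 (by intro j hj; simp [zero_pow (by omega : 2 * j ≠ 0)])]
    simp [dd]
  have hh0 : h 0 = 1 := by simp [hh, hg0]
  have hx2 : h x = 1 := by rw [this, hh0]
  have hsq := sqrt_one_sub_sq_pos hx
  rw [hh] at hx2
  simp only at hx2
  field_simp
  linarith [hx2]

noncomputable def SS (x : ℝ) : ℝ := ∑' j, cc j * x ^ (2 * j + 1)

lemma summable_SS {x : ℝ} (hx : |x| < 1) : Summable (fun j => cc j * x ^ (2 * j + 1)) := by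
  apply summable_odd_coeff hx
  intro j
  rw [abs_of_pos (cc_pos j)]
  nlinarith [cc_le_one j, Nat.cast_nonneg (α := ℝ) j]

lemma cc_mul : ∀ (j : ℕ), cc j * (2 * (j:ℝ) + 1) = dd j := by
  intro j
  unfold cc
  field_simp

lemma SS_hasDerivAt {x : ℝ} (hx : |x| < 1) :
    HasDerivAt SS (1 / Real.sqrt (1 - x ^ 2)) x := by
  set R : ℝ := (|x| + 1) / 2 with hR
  have hR0 : 0 < R := by positivity
  have hR1 : R < 1 := by rw [hR]; linarith
  have hxR : |x| < R := by rw [hR]; linarith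
  have hder : HasDerivAt SS (∑' j, cc j * (((2 * j + 1 : ℕ) : ℝ) * x ^ (2 * j + 1 - 1))) x := by
    unfold SS
    apply hasDerivAt_tsum_of_isPreconnected
      (u := fun j => R ^ (2 * j))
      (g := fun j y => cc j * y ^ (2 * j + 1))
      (g' := fun j y => cc j * (((2 * j + 1 : ℕ) : ℝ) * y ^ (2 * j + 1 - 1)))
      (t := Metric.ball (0:ℝ) R) (y₀ := x)
    · exact summable_geometric_of_lt_one hR0.le hR1 |>.comp_injective
        (fun a b h => by dsimp at h; omega : Function.Injective (fun j : ℕ => 2 * j))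
    · exact Metric.isOpen_ball
    · exact (convex_ball (0:ℝ) R).isPreconnected
    · intro n y _
      exact (hasDerivAt_pow (2 * n + 1) y).const_mul (cc n)
    · intro n y hy
      rw [Metric.mem_ball, dist_zero_right, Real.norm_eq_abs] at hy
      rw [Real.norm_eq_abs, abs_mul, abs_mul, abs_of_pos (cc_pos n), Nat.abs_cast, abs_pow]
      rw [show 2 * n + 1 - 1 = 2 * n by omega]
      calc cc n * (((2 * n + 1 : ℕ) : ℝ) * |y| ^ (2 * n))
          ≤ cc n * (((2 * n + 1 : ℕ) : ℝ) * R ^ (2 * n)) := by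
            apply mul_le_mul_of_nonneg_left _ (cc_pos n).le
            apply mul_le_mul_of_nonneg_left _ (Nat.cast_nonneg _)
            exact pow_le_pow_left₀ (abs_nonneg y) hy.le _
      _ = dd n * R ^ (2 * n) := by
            rw [← cc_mul n]; push_cast; ring
      _ ≤ 1 * R ^ (2 * n) := by
            apply mul_le_mul_of_nonneg_right (dd_le_one n) (by positivity)
      _ = R ^ (2 * n) := one_mul _
    · rw [Metric.mem_ball, dist_zero_right, Real.norm_eq_abs]; exact hxR
    · exact summable_SS hx
    · rw [Metric.mem_ball, dist_zero_right, Real.norm_eq_abs]; exact hxR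
  have heq : (∑' j, cc j * (((2 * j + 1 : ℕ) : ℝ) * x ^ (2 * j + 1 - 1))) = gg x := by
    unfold gg
    apply tsum_congr
    intro j
    rw [show 2 * j + 1 - 1 = 2 * j by omega, ← cc_mul j]
    push_cast; ring
  rw [heq, gg_eq hx] at hder
  exact hder

lemma arcsin_eq_tsum {x : ℝ} (hx : |x| < 1) :
    Real.arcsin x = ∑' j, cc j * x ^ (2 * j + 1) := by
  have hder : ∀ y ∈ Set.Ioo (-1:ℝ) 1, HasDerivAt (fun z => SS z - Real.arcsin z) 0 y := by
    intro y hy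
    have hy' : |y| < 1 := by rw [abs_lt]; exact ⟨hy.1, hy.2⟩
    have h1 := SS_hasDerivAt hy'
    have h2 := Real.hasDerivAt_arcsin (by linarith [hy.1] : y ≠ -1) (by linarith [hy.2] : y ≠ 1)
    have h3 : HasDerivAt (fun z => SS z - Real.arcsin z) (1 / Real.sqrt (1 - y ^ 2) - 1 / Real.sqrt (1 - y ^ 2)) y := h1.sub h2
    simpa using h3
  have := const_of_deriv_zero hder (mem_Ioo_of_abs hx)
  have hS0 : SS 0 = 0 := by
    unfold SS
    rw [tsum_eq_single 0 (by intro j hj; simp)]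
    simp
  rw [Real.arcsin_zero, hS0] at this
  have : SS x = Real.arcsin x := by linarith [this]
  rw [← this]; rfl

noncomputable def ee (j : ℕ) : ℝ := cc j / (2 ^ (2 * j + 1) * (4 * π))

noncomputable def bb (m : ℕ) : ℝ :=
  (if m ≤ 1 then (1:ℝ)/8 else 0) + ∑' j, ee j * ((2 * j + 2).choose m : ℝ)

lemma ee_pos (j : ℕ) : 0 < ee j := by
  unfold ee
  have := cc_pos j
  have := Real.pi_pos
  positivity

lemma row_vanish (j : ℕ) (t : ℝ) :
    ∀ m ∉ Finset.range (2 * j + 3), ee j * ((2 * j + 2).choose m : ℝ) * t ^ m = 0 := by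
  intro m hm
  rw [Finset.mem_range, not_lt] at hm
  rw [Nat.choose_eq_zero_of_lt (by omega)]
  simp

lemma row_sum (j : ℕ) (t : ℝ) :
    ∑' m, ee j * ((2 * j + 2).choose m : ℝ) * t ^ m = ee j * (t + 1) ^ (2 * j + 2) := by
  rw [tsum_eq_sum (row_vanish j t), add_pow t 1 (2 * j + 2), Finset.mul_sum]
  apply Finset.sum_congr rfl
  intro m _
  rw [one_pow]
  ring

lemma row_summable (j : ℕ) (t : ℝ) :
    Summable (fun m => ee j * ((2 * j + 2).choose m : ℝ) * t ^ m) :=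
  summable_of_ne_finset_zero (row_vanish j t)

lemma Fabs_summable {t : ℝ} (ht : |t| < 1) :
    Summable (fun p : ℕ × ℕ => |ee p.1 * ((2 * p.1 + 2).choose p.2 : ℝ) * t ^ p.2|) := by
  set q : ℝ := (|t| + 1) / 2 with hq
  have hq0 : 0 < q := by positivity
  have hq1 : q < 1 := by rw [hq]; linarith
  have habs : ∀ j m : ℕ, |ee j * ((2 * j + 2).choose m : ℝ) * t ^ m|
      = ee j * ((2 * j + 2).choose m : ℝ) * |t| ^ m := by
    intro j m
    rw [abs_mul, abs_mul, abs_of_pos (ee_pos j), Nat.abs_cast, abs_pow]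
  apply (summable_prod_of_nonneg (fun p => abs_nonneg _)).2
  constructor
  · intro j
    apply summable_of_ne_finset_zero (s := Finset.range (2 * j + 3))
    intro m hm
    rw [habs]
    rw [Finset.mem_range, not_lt] at hm
    rw [Nat.choose_eq_zero_of_lt (by omega)]
    simp
  · have hval : ∀ j : ℕ, (∑' m, |ee j * ((2 * j + 2).choose m : ℝ) * t ^ m|)
        = ee j * (|t| + 1) ^ (2 * j + 2) := by
      intro j
      calc (∑' m, |ee j * ((2 * j + 2).choose m : ℝ) * t ^ m|)
          = ∑' m, ee j * ((2 * j + 2).choose m : ℝ) * |t| ^ m := tsum_congr fun m => habs j m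
      _ = ee j * (|t| + 1) ^ (2 * j + 2) := row_sum j |t|
    simp only [hval]
    apply summable_workhorse hq0.le hq1
    intro j
    have h2q : |t| + 1 = 2 * q := by rw [hq]; ring
    have hpos : (0:ℝ) < 2 ^ (2 * j + 1) * (4 * π) := by
      have := Real.pi_pos; positivity
    rw [abs_of_pos (by have := ee_pos j; positivity), h2q, mul_pow]
    have hval2 : ee j * (2 ^ (2 * j + 2) * q ^ (2 * j + 2))
        = cc j * q ^ (2 * j + 2) * (1 / (2 * π)) := by
      unfold ee
      have := Real.pi_ne_zero
      field_simp
      ring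
    rw [hval2]
    have hπ : 1 / (2 * π) ≤ 1 := by
      rw [div_le_one (by positivity)]
      nlinarith [Real.pi_gt_three]
    calc cc j * q ^ (2 * j + 2) * (1 / (2 * π))
        ≤ 1 * q ^ j * 1 := by
          apply mul_le_mul _ hπ (by positivity) (by positivity)
          apply mul_le_mul (cc_le_one j) _ (by positivity) one_pos.le
          calc q ^ (2 * j + 2) ≤ q ^ j := pow_le_pow_of_le_one hq0.le hq1.le (by omega)
          _ = q ^ j := rfl
    _ ≤ 2 * ((j:ℝ) + 1) * q ^ j := by
          have h1 : (1:ℝ) ≤ 2 * ((j:ℝ) + 1) := by nlinarith [Nat.cast_nonneg (α := ℝ) j]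
          nlinarith [pow_nonneg hq0.le j]

lemma summable_col (m : ℕ) : Summable (fun j => ee j * ((2 * j + 2).choose m : ℝ)) := by
  have h := Fabs_summable (t := 1/2) (by rw [abs_of_pos] <;> norm_num)
  have h2 := h.comp_injective
    (show Function.Injective (fun j : ℕ => ((j, m) : ℕ × ℕ)) from fun a b hab => by
      simpa using congrArg Prod.fst hab)
  have h3 := h2.mul_right ((2:ℝ) ^ m)
  apply h3.congr
  intro j
  simp only [Function.comp_apply]
  rw [abs_mul, abs_mul, abs_of_pos (ee_pos j), Nat.abs_cast, abs_pow]
  rw [abs_of_nonneg (by norm_num : (0:ℝ) ≤ 1/2)]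
  rw [mul_assoc, mul_assoc, ← mul_pow]
  norm_num

lemma bb_pos (m : ℕ) : 0 < bb m := by
  unfold bb
  apply add_pos_of_nonneg_of_pos
  · split <;> norm_num
  · apply Summable.tsum_pos (summable_col m) (fun j => mul_nonneg (ee_pos j).le (Nat.cast_nonneg _)) m
    have hc : (0:ℝ) < ((2 * m + 2).choose m : ℝ) := by
      exact_mod_cast Nat.choose_pos (by omega)
    exact mul_pos (ee_pos m) hc

/-- **The modified (bias-augmented) ReLU NTK kernel has a power series with
strictly positive coefficients at every order.**
There is a sequence `b : ℕ → ℝ` with `bₖ > 0` for all `k` such that for all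
`|t| < 1`,
`((t+1)/(4π)) (π - arccos((t+1)/2)) = ∑ₖ bₖ tᵏ`, the series converging
absolutely. -/
theorem stmt15 :
    ∃ b : ℕ → ℝ, (∀ k, 0 < b k) ∧
      ∀ t : ℝ, |t| < 1 →
        Summable (fun k : ℕ => |b k * t ^ k|) ∧
        ((t + 1) / (4 * Real.pi)) * (Real.pi - Real.arccos ((t + 1) / 2)) =
          ∑' k : ℕ, b k * t ^ k := by
  refine ⟨bb, bb_pos, ?_⟩
  intro t ht
  have ht' := abs_lt.1 ht
  have hu : |(t + 1) / 2| < 1 := by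
    rw [abs_lt]; constructor <;> [linarith [ht'.1]; linarith [ht'.2]]
  have hinj : ∀ m : ℕ, Function.Injective (fun j : ℕ => ((j, m) : ℕ × ℕ)) :=
    fun m a b hab => by simpa using congrArg Prod.fst hab
  have hFabs : Summable (fun p : ℕ × ℕ => |ee p.1 * ((2 * p.1 + 2).choose p.2 : ℝ) * t ^ p.2|) :=
    Fabs_summable ht
  have hF : Summable (fun p : ℕ × ℕ => ee p.1 * ((2 * p.1 + 2).choose p.2 : ℝ) * t ^ p.2) :=
    Summable.of_abs hFabs
  have hcol : ∀ m, Summable (fun j => ee j * ((2 * j + 2).choose m : ℝ) * t ^ m) := by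
    intro m
    exact (hF.comp_injective (hinj m)).congr (fun j => rfl)
  have hcolabs : ∀ m, Summable (fun j => |ee j * ((2 * j + 2).choose m : ℝ) * t ^ m|) := by
    intro m
    exact (hFabs.comp_injective (hinj m)).congr (fun j => rfl)
  have hrow : ∀ j, Summable (fun m => ee j * ((2 * j + 2).choose m : ℝ) * t ^ m) :=
    fun j => row_summable j t
  have hswap : Summable (fun m => ∑' j, |ee j * ((2 * j + 2).choose m : ℝ) * t ^ m|) := by
    have he : Summable (fun p : ℕ × ℕ => |ee p.2 * ((2 * p.2 + 2).choose p.1 : ℝ) * t ^ p.1|) := by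
      have := ((Equiv.prodComm ℕ ℕ).summable_iff
        (f := fun p : ℕ × ℕ => |ee p.1 * ((2 * p.1 + 2).choose p.2 : ℝ) * t ^ p.2|)).2 hFabs
      exact this.congr (fun p => rfl)
    exact ((summable_prod_of_nonneg (fun p => abs_nonneg _)).1 he).2
  have hL : Summable (fun m => (if m ≤ 1 then (1:ℝ)/8 else 0) * t ^ m) := by
    apply summable_of_ne_finset_zero (s := Finset.range 2)
    intro m hm
    rw [Finset.mem_range, not_lt] at hm
    rw [if_neg (by omega)]
    ring
  have hLabs : Summable (fun m => |(if m ≤ 1 then (1:ℝ)/8 else 0) * t ^ m|) := by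
    apply summable_of_ne_finset_zero (s := Finset.range 2)
    intro m hm
    rw [Finset.mem_range, not_lt] at hm
    rw [if_neg (by omega)]
    simp
  have hbbt : ∀ m, bb m * t ^ m
      = (if m ≤ 1 then (1:ℝ)/8 else 0) * t ^ m
        + ∑' j, ee j * ((2 * j + 2).choose m : ℝ) * t ^ m := by
    intro m
    unfold bb
    rw [add_mul, ← tsum_mul_right]
  have habstsum : ∀ m, |∑' j, ee j * ((2 * j + 2).choose m : ℝ) * t ^ m|
      ≤ ∑' j, |ee j * ((2 * j + 2).choose m : ℝ) * t ^ m| := by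
    intro m
    exact norm_tsum_le_tsum_norm
      (f := fun j => ee j * ((2 * j + 2).choose m : ℝ) * t ^ m) (hcolabs m)
  have hinner : Summable (fun m => ∑' j, ee j * ((2 * j + 2).choose m : ℝ) * t ^ m) := by
    apply Summable.of_norm_bounded
      (g := fun m => ∑' j, |ee j * ((2 * j + 2).choose m : ℝ) * t ^ m|) hswap
    intro m
    rw [Real.norm_eq_abs]
    exact habstsum m
  constructor
  · apply Summable.of_nonneg_of_le (fun m => abs_nonneg _) _ (hLabs.add hswap)
    intro m
    rw [hbbt m]
    calc |(if m ≤ 1 then (1:ℝ)/8 else 0) * t ^ m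
          + ∑' j, ee j * ((2 * j + 2).choose m : ℝ) * t ^ m|
        ≤ |(if m ≤ 1 then (1:ℝ)/8 else 0) * t ^ m|
          + |∑' j, ee j * ((2 * j + 2).choose m : ℝ) * t ^ m| := abs_add_le _ _
    _ ≤ |(if m ≤ 1 then (1:ℝ)/8 else 0) * t ^ m|
          + ∑' j, |ee j * ((2 * j + 2).choose m : ℝ) * t ^ m| :=
        add_le_add_right (habstsum m) _
  · have hLsum : ∑' m, (if m ≤ 1 then (1:ℝ)/8 else 0) * t ^ m = 1/8 + t * (1/8) := by
      rw [tsum_eq_sum (s := Finset.range 2) (by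
        intro m hm
        rw [Finset.mem_range, not_lt] at hm
        rw [if_neg (by omega)]
        ring)]
      rw [Finset.sum_range_succ, Finset.sum_range_succ, Finset.sum_range_zero]
      norm_num [mul_comm]
    have hpt : ∀ j, ee j * (t + 1) ^ (2 * j + 2)
        = ((t + 1) / (4 * π)) * (cc j * ((t + 1) / 2) ^ (2 * j + 1)) := by
      intro j
      unfold ee
      rw [div_pow]
      have := Real.pi_ne_zero
      field_simp
      ring
    symm
    calc ∑' k, bb k * t ^ k
        = ∑' m, ((if m ≤ 1 then (1:ℝ)/8 else 0) * t ^ m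
            + ∑' j, ee j * ((2 * j + 2).choose m : ℝ) * t ^ m) := tsum_congr hbbt
      _ = (1/8 + t * (1/8))
            + ∑' m, ∑' j, ee j * ((2 * j + 2).choose m : ℝ) * t ^ m := by
          rw [Summable.tsum_add hL hinner, hLsum]
      _ = (1/8 + t * (1/8))
            + ∑' j, ∑' m, ee j * ((2 * j + 2).choose m : ℝ) * t ^ m := by
          rw [Summable.tsum_comm' (f := fun (j m : ℕ) => ee j * ((2 * j + 2).choose m : ℝ) * t ^ m)
            hF hrow hcol]
      _ = (1/8 + t * (1/8)) + ∑' j, ee j * (t + 1) ^ (2 * j + 2) := by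
          congr 1
          exact tsum_congr fun j => row_sum j t
      _ = (1/8 + t * (1/8)) + ((t + 1) / (4 * π)) * Real.arcsin ((t + 1) / 2) := by
          congr 1
          rw [arcsin_eq_tsum hu, ← tsum_mul_left]
          exact tsum_congr hpt
      _ = ((t + 1) / (4 * π)) * (π - Real.arccos ((t + 1) / 2)) := by
          rw [Real.arccos_eq_pi_div_two_sub_arcsin]
          have := Real.pi_ne_zero
          field_simp
          ring
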